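/- Let x ∈ V with height m ≥ 1 and let S, S' ⊊ {0,...,n} be proper nonempty subsets with x + e(S) and x + e(S') both of height m − 1 (i.e., both moves decrease height). If S ≠ S' and neither S ⊆ S' nor S' ⊆ S and S ∪ S' ≠ {0,...,n}, then the four vertices x, x+e(S), x+e(S'), and x+e(S)+e(S') form a 4-cycle in G, i.e., consecutive pairs are adjacent; moreover x+e(S∩S') and x+e(S∪S') are each adjacent to all four vertices of this 4-cycle. -/

import Mathlib

open Finset

/-- The vertex set of the 1-skeleton of the Ã_n Coxeter complex:
integer vectors summing to zero with all pairwise coordinate differences divisible by n+1. -/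
def inV (n : ℕ) (x : Fin (n+1) → ℤ) : Prop :=
  (∑ i, x i = 0) ∧ ∀ i j, ((n : ℤ) + 1) ∣ x i - x j

/-- Maximum coordinate. -/
def maxC (n : ℕ) (x : Fin (n+1) → ℤ) : ℤ := univ.sup' univ_nonempty x

/-- Minimum coordinate. -/
def minC (n : ℕ) (x : Fin (n+1) → ℤ) : ℤ := univ.inf' univ_nonempty x

/-- An edge vector: coordinates sum to 0, pairwise differences divisible by n+1,
and max minus min equals n+1. -/
def isEdge (n : ℕ) (e : Fin (n+1) → ℤ) : Prop :=
  inV n e ∧ maxC n e - minC n e = (n : ℤ) + 1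

/-- Height of a vertex: (max − min)/(n+1). -/
def height (n : ℕ) (x : Fin (n+1) → ℤ) : ℤ :=
  (maxC n x - minC n x) / ((n : ℤ) + 1)

/-- The edge vector associated to a subset S: value n+1−|S| on S and −|S| off S. -/
def eVec (n : ℕ) (S : Finset (Fin (n+1))) : Fin (n+1) → ℤ :=
  fun i => if i ∈ S then (n : ℤ) + 1 - S.card else -(S.card : ℤ)

lemma inV_zero (n : ℕ) : inV n 0 := ⟨by simp, fun i j => by simp⟩

lemma maxC_neg (n : ℕ) (x : Fin (n+1) → ℤ) : maxC n (-x) = - minC n x := by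
  unfold maxC minC
  apply le_antisymm
  · apply Finset.sup'_le
    intro i hi
    have h1 : univ.inf' univ_nonempty x ≤ x i := Finset.inf'_le _ hi
    have h2 : (-x) i = -(x i) := rfl
    omega
  · obtain ⟨i, hi, h⟩ := Finset.exists_mem_eq_inf' (univ_nonempty) x
    rw [h]
    have h1 : (-x) i ≤ univ.sup' univ_nonempty (-x) := Finset.le_sup' (-x) hi
    have h2 : (-x) i = -(x i) := rfl
    omega

lemma minC_neg (n : ℕ) (x : Fin (n+1) → ℤ) : minC n (-x) = - maxC n x := by
  have := maxC_neg n (-x)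
  rw [neg_neg] at this
  unfold maxC minC at *
  omega

lemma isEdge_neg {n : ℕ} {e : Fin (n+1) → ℤ} (h : isEdge n e) : isEdge n (-e) := by
  obtain ⟨⟨h1, h2⟩, h3⟩ := h
  refine ⟨⟨by simp [h1], fun i j => by
    have h' : (-e) i - (-e) j = e j - e i := by
      simp only [Pi.neg_apply]; ring
    rw [h']; exact h2 j i⟩, ?_⟩
  rw [maxC_neg, minC_neg]
  omega

/-- The graph G on V with edge-vector adjacency. -/
def G (n : ℕ) : SimpleGraph {x : Fin (n+1) → ℤ // inV n x} where
  Adj x y := isEdge n (y.1 - x.1)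
  symm := ⟨by
    intro x y h
    have := isEdge_neg h
    rwa [neg_sub] at this⟩
  loopless := ⟨by
    intro x h
    obtain ⟨-, h3⟩ := h
    rw [sub_self] at h3
    simp [maxC, minC] at h3
    omega⟩

/-- Adjacency of raw vectors: difference is an edge vector. -/
def adjV (n : ℕ) (x y : Fin (n+1) → ℤ) : Prop := isEdge n (y - x)

lemma exists_not_mem_of_ne_univ {n : ℕ} {S : Finset (Fin (n+1))} (h : S ≠ univ) :
    ∃ b, b ∉ S := by
  by_contra hc
  push_neg at hc
  exact h (Finset.eq_univ_iff_forall.mpr hc)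

lemma eVec_sum (n : ℕ) (S : Finset (Fin (n+1))) : ∑ i, eVec n S i = 0 := by
  have hcard : S.card ≤ n + 1 := by
    have := Finset.card_le_univ S
    simpa using this
  simp only [eVec]
  rw [Finset.sum_ite, Finset.sum_const, Finset.sum_const]
  have h1 : (univ.filter (· ∈ S)) = S := by ext i; simp
  have h2 : (univ.filter (¬ · ∈ S)) = Sᶜ := by ext i; simp
  rw [h1, h2, Finset.card_compl]
  simp only [Fintype.card_fin, nsmul_eq_mul]
  push_cast [hcard]
  ring

lemma eVec_dvd (n : ℕ) (S : Finset (Fin (n+1))) (i j : Fin (n+1)) :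
    ((n : ℤ) + 1) ∣ eVec n S i - eVec n S j := by
  simp only [eVec]
  by_cases h1 : i ∈ S <;> by_cases h2 : j ∈ S
  · rw [if_pos h1, if_pos h2]; simp
  · rw [if_pos h1, if_neg h2]; exact ⟨1, by ring⟩
  · rw [if_neg h1, if_pos h2]; exact ⟨-1, by ring⟩
  · rw [if_neg h1, if_neg h2]; simp

lemma eVec_isEdge (n : ℕ) {S : Finset (Fin (n+1))} (h1 : S.Nonempty) (h2 : S ≠ univ) :
    isEdge n (eVec n S) := by
  obtain ⟨a, ha⟩ := h1
  obtain ⟨b, hb⟩ := exists_not_mem_of_ne_univ h2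
  have hmax : maxC n (eVec n S) = (n : ℤ) + 1 - S.card := by
    apply le_antisymm
    · apply Finset.sup'_le
      intro i _
      simp only [eVec]
      split <;> omega
    · calc ((n : ℤ) + 1 - S.card) = eVec n S a := by simp [eVec, ha]
        _ ≤ maxC n (eVec n S) := Finset.le_sup' _ (Finset.mem_univ a)
  have hmin : minC n (eVec n S) = -(S.card : ℤ) := by
    apply le_antisymm
    · calc minC n (eVec n S) ≤ eVec n S b := Finset.inf'_le _ (Finset.mem_univ b)
        _ = -(S.card : ℤ) := by simp [eVec, hb]
    · apply Finset.le_inf'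
      intro i _
      simp only [eVec]
      split <;> omega
  exact ⟨⟨eVec_sum n S, eVec_dvd n S⟩, by rw [hmax, hmin]; ring⟩

lemma inV_add_eVec {n : ℕ} {x : Fin (n+1) → ℤ} (hx : inV n x) (S : Finset (Fin (n+1))) :
    inV n (x + eVec n S) := by
  refine ⟨?_, fun i j => ?_⟩
  · simp only [Pi.add_apply, Finset.sum_add_distrib, hx.1, eVec_sum, add_zero]
  · have h1 := hx.2 i j
    have h2 := eVec_dvd n S i j
    have : x i + eVec n S i - (x j + eVec n S j) = (x i - x j) + (eVec n S i - eVec n S j) := by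
      ring
    simpa [Pi.add_apply, this] using dvd_add h1 h2

lemma span_eq {n : ℕ} {x : Fin (n+1) → ℤ} (hx : inV n x) :
    maxC n x - minC n x = ((n : ℤ) + 1) * height n x := by
  obtain ⟨j, -, hj⟩ := Finset.exists_mem_eq_sup' (univ_nonempty) x
  obtain ⟨i, -, hi⟩ := Finset.exists_mem_eq_inf' (univ_nonempty) x
  have hdvd : ((n : ℤ) + 1) ∣ maxC n x - minC n x := by
    rw [show maxC n x = x j from hj, show minC n x = x i from hi]
    exact hx.2 j i
  unfold height
  exact (Int.mul_ediv_cancel' hdvd).symm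

lemma min_mem_of_dec {n : ℕ} {x : Fin (n+1) → ℤ} (hx : inV n x) {S : Finset (Fin (n+1))}
    (hS : S.Nonempty) (hSu : S ≠ univ)
    (hdec : height n (x + eVec n S) = height n x - 1)
    {i : Fin (n+1)} (hi : x i = minC n x) : i ∈ S := by
  by_contra hiS
  have hx' : inV n (x + eVec n S) := inV_add_eVec hx S
  have hsp := span_eq hx
  have hsp' := span_eq hx'
  rw [hdec] at hsp'
  obtain ⟨j, -, hj⟩ := Finset.exists_mem_eq_sup' (univ_nonempty) x
  have hmin' : minC n (x + eVec n S) ≤ minC n x - S.card := by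
    calc minC n (x + eVec n S) ≤ (x + eVec n S) i := Finset.inf'_le _ (Finset.mem_univ i)
      _ = minC n x - S.card := by simp only [Pi.add_apply, eVec, if_neg hiS, hi]; ring
  have hmax' : maxC n x - S.card ≤ maxC n (x + eVec n S) := by
    calc maxC n x - (S.card : ℤ) = x j - S.card := by rw [show maxC n x = x j from hj]
      _ ≤ (x + eVec n S) j := by simp only [Pi.add_apply, eVec]; split <;> omega
      _ ≤ maxC n (x + eVec n S) := Finset.le_sup' _ (Finset.mem_univ j)
  have hpos : (0 : ℤ) < (n : ℤ) + 1 := by positivity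
  nlinarith [hsp, hsp', hmin', hmax']

lemma eVec_sub_inter (n : ℕ) (S T : Finset (Fin (n+1))) :
    eVec n S - eVec n (S ∩ T) = eVec n (S \ T) := by
  have hc := Finset.card_sdiff_add_card_inter S T
  funext i
  simp only [Pi.sub_apply, eVec, Finset.mem_inter, Finset.mem_sdiff]
  by_cases h1 : i ∈ S <;> by_cases h2 : i ∈ T <;> simp [h1, h2] <;> omega

lemma eVec_union_sub (n : ℕ) (S T : Finset (Fin (n+1))) :
    eVec n (S ∪ T) - eVec n S = eVec n (T \ S) := by
  have hc := Finset.card_sdiff_add_card_inter T S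
  have hc2 := Finset.card_union_add_card_inter S T
  have hc3 : (S ∩ T).card = (T ∩ S).card := by rw [Finset.inter_comm]
  funext i
  simp only [Pi.sub_apply, eVec, Finset.mem_union, Finset.mem_sdiff]
  by_cases h1 : i ∈ S <;> by_cases h2 : i ∈ T <;> simp [h1, h2] <;> omega

lemma eVec_add_eVec (n : ℕ) (S T : Finset (Fin (n+1))) :
    eVec n S + eVec n T = eVec n (S ∩ T) + eVec n (S ∪ T) := by
  have hc2 := Finset.card_union_add_card_inter S T
  funext i
  simp only [Pi.add_apply, eVec, Finset.mem_union, Finset.mem_inter]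
  by_cases h1 : i ∈ S <;> by_cases h2 : i ∈ T <;> simp [h1, h2] <;> omega

lemma sdiff_ne_univ {n : ℕ} {S T : Finset (Fin (n+1))} (h : T.Nonempty) :
    S \ T ≠ univ := by
  intro he
  obtain ⟨a, ha⟩ := h
  have : a ∈ S \ T := he ▸ Finset.mem_univ a
  exact (Finset.mem_sdiff.mp this).2 ha

/-- two incomparable height-decreasing moves span a 4-cycle, and the
vertices x+e(S∩S') and x+e(S∪S') are adjacent to all four vertices of the 4-cycle. -/
theorem stmt15 (n : ℕ) (hn : 3 ≤ n) (x : Fin (n+1) → ℤ) (hx : inV n x)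
    (m : ℤ) (hm : height n x = m) (hm1 : 1 ≤ m)
    (S S' : Finset (Fin (n+1)))
    (hS : S.Nonempty) (hSu : S ≠ univ) (hS' : S'.Nonempty) (hS'u : S' ≠ univ)
    (hdec : height n (x + eVec n S) = m - 1)
    (hdec' : height n (x + eVec n S') = m - 1)
    (hne : S ≠ S') (h1 : ¬ S ⊆ S') (h2 : ¬ S' ⊆ S) (h3 : S ∪ S' ≠ univ) :
    (adjV n x (x + eVec n S) ∧
     adjV n (x + eVec n S) (x + eVec n S + eVec n S') ∧
     adjV n (x + eVec n S') (x + eVec n S + eVec n S') ∧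
     adjV n x (x + eVec n S')) ∧
    (∀ y ∈ ({x, x + eVec n S, x + eVec n S', x + eVec n S + eVec n S'} :
        Set (Fin (n+1) → ℤ)),
      adjV n (x + eVec n (S ∩ S')) y ∧ adjV n (x + eVec n (S ∪ S')) y) := by
  -- the minimum is attained inside S ∩ S'
  obtain ⟨i0, -, hi0⟩ := Finset.exists_mem_eq_inf' (univ_nonempty) x
  have hi0min : x i0 = minC n x := hi0.symm
  have hi0S : i0 ∈ S :=
    min_mem_of_dec hx hS hSu (by rw [hm]; exact hdec) hi0min
  have hi0S' : i0 ∈ S' :=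
    min_mem_of_dec hx hS' hS'u (by rw [hm]; exact hdec') hi0min
  have hA : (S ∩ S').Nonempty := ⟨i0, Finset.mem_inter.mpr ⟨hi0S, hi0S'⟩⟩
  have hAu : S ∩ S' ≠ univ := by
    intro he
    exact hSu (Finset.univ_subset_iff.mp (he ▸ Finset.inter_subset_left))
  have hU : (S ∪ S').Nonempty := hS.mono Finset.subset_union_left
  have hSd : (S \ S').Nonempty := Finset.sdiff_nonempty.mpr h1
  have hS'd : (S' \ S).Nonempty := Finset.sdiff_nonempty.mpr h2
  have eS := eVec_isEdge n hS hSu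
  have eS' := eVec_isEdge n hS' hS'u
  have eA := eVec_isEdge n hA hAu
  have eU := eVec_isEdge n hU h3
  have eSd := eVec_isEdge n hSd (sdiff_ne_univ hS')
  have eS'd := eVec_isEdge n hS'd (sdiff_ne_univ hS)
  constructor
  · refine ⟨?_, ?_, ?_, ?_⟩
    · show isEdge n _
      rw [show x + eVec n S - x = eVec n S from by ring]; exact eS
    · show isEdge n _
      rw [show x + eVec n S + eVec n S' - (x + eVec n S) = eVec n S' from by ring]; exact eS'
    · show isEdge n _
      rw [show x + eVec n S + eVec n S' - (x + eVec n S') = eVec n S from by ring]; exact eS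
    · show isEdge n _
      rw [show x + eVec n S' - x = eVec n S' from by ring]; exact eS'
  · have c1 : adjV n (x + eVec n (S ∩ S')) x := by
      show isEdge n _
      rw [show x - (x + eVec n (S ∩ S')) = -(eVec n (S ∩ S')) from by ring]
      exact isEdge_neg eA
    have c2 : adjV n (x + eVec n (S ∪ S')) x := by
      show isEdge n _
      rw [show x - (x + eVec n (S ∪ S')) = -(eVec n (S ∪ S')) from by ring]
      exact isEdge_neg eU
    have c3 : adjV n (x + eVec n (S ∩ S')) (x + eVec n S) := by
      show isEdge n _
      rw [show x + eVec n S - (x + eVec n (S ∩ S')) = eVec n S - eVec n (S ∩ S') from by ring,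
        eVec_sub_inter]
      exact eSd
    have c4 : adjV n (x + eVec n (S ∪ S')) (x + eVec n S) := by
      show isEdge n _
      rw [show x + eVec n S - (x + eVec n (S ∪ S')) = -(eVec n (S ∪ S') - eVec n S) from by ring,
        eVec_union_sub]
      exact isEdge_neg eS'd
    have c5 : adjV n (x + eVec n (S ∩ S')) (x + eVec n S') := by
      show isEdge n _
      rw [show x + eVec n S' - (x + eVec n (S ∩ S')) = eVec n S' - eVec n (S' ∩ S) from by
          rw [Finset.inter_comm]; ring,
        eVec_sub_inter]
      exact eS'd
    have c6 : adjV n (x + eVec n (S ∪ S')) (x + eVec n S') := by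
      show isEdge n _
      rw [show x + eVec n S' - (x + eVec n (S ∪ S')) = -(eVec n (S' ∪ S) - eVec n S') from by
          rw [Finset.union_comm]; ring,
        eVec_union_sub]
      exact isEdge_neg eSd
    have key := eVec_add_eVec n S S'
    have c7 : adjV n (x + eVec n (S ∩ S')) (x + eVec n S + eVec n S') := by
      show isEdge n _
      rw [show x + eVec n S + eVec n S' - (x + eVec n (S ∩ S'))
          = eVec n S + eVec n S' - eVec n (S ∩ S') from by ring, key,
        show eVec n (S ∩ S') + eVec n (S ∪ S') - eVec n (S ∩ S') = eVec n (S ∪ S') from by ring]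
      exact eU
    have c8 : adjV n (x + eVec n (S ∪ S')) (x + eVec n S + eVec n S') := by
      show isEdge n _
      rw [show x + eVec n S + eVec n S' - (x + eVec n (S ∪ S'))
          = eVec n S + eVec n S' - eVec n (S ∪ S') from by ring, key,
        show eVec n (S ∩ S') + eVec n (S ∪ S') - eVec n (S ∪ S') = eVec n (S ∩ S') from by ring]
      exact eA
    intro y hy
    simp only [Set.mem_insert_iff, Set.mem_singleton_iff] at hy
    rcases hy with rfl | rfl | rfl | rfl
    · exact ⟨c1, c2⟩
    · exact ⟨c3, c4⟩
    · exact ⟨c5, c6⟩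
    · exact ⟨c7, c8⟩
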